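/- arXiv:2303.12287 — 2 statements merged into one kernel-verified Lean document; each statement's English description precedes it below -/
import Mathlib

section
/- In the realizable setting, the predictions of Vovk's aggregating algorithm converge to the true conditional distributions in total variation on average: if there exists an expert i* ∈ I such that conditionally on the history and context x^t, the outcome y^t is distributed as p_{i*}(x^t), then E[∑_{t=1}^T TV(q̂^t, p_{i*}(x^t))] ≤ sqrt(T · log|I|), where q̂^t are the predictions of Vovk's aggregating algorithm. -/
/-- Total variation distance between two distributions on a finite set,
expressed as half the ℓ₁ distance. -/
noncomputable def tvDist {Y : Type} [Fintype Y] (p q : Y → ℝ) : ℝ :=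
  (∑ y : Y, |p y - q y|) / 2

lemma kl_pinsker {Y : Type} [Fintype Y] [Nonempty Y] (a b : Y → ℝ)
    (ha : ∀ y, 0 < a y) (hb : ∀ y, 0 < b y)
    (ha1 : ∑ y, a y = 1) (hb1 : ∑ y, b y = 1) :
    0 ≤ ∑ y, a y * (Real.log (a y) - Real.log (b y)) ∧
    tvDist b a ≤ Real.sqrt (∑ y, a y * (Real.log (a y) - Real.log (b y))) := by
  set K := ∑ y, a y * (Real.log (a y) - Real.log (b y)) with hK
  set B := ∑ y : Y, Real.sqrt (a y) * Real.sqrt (b y) with hB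
  have hB0 : 0 < B :=
    Finset.sum_pos (fun y _ => mul_pos (Real.sqrt_pos.2 (ha y)) (Real.sqrt_pos.2 (hb y)))
      Finset.univ_nonempty
  have hB1 : B ≤ 1 := by
    have h := Real.sum_sqrt_mul_sqrt_le (Finset.univ : Finset Y) (f := a) (g := b)
      (fun y => (ha y).le) (fun y => (hb y).le)
    rw [ha1, hb1, Real.sqrt_one, mul_one] at h
    exact h
  have hjen : -K / 2 ≤ Real.log B := by
    have hgm := Real.geom_mean_le_arith_mean_weighted Finset.univ a
      (fun y => Real.sqrt (b y) / Real.sqrt (a y)) (fun y _ => (ha y).le) ha1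
      (fun y _ => (div_pos (Real.sqrt_pos.2 (hb y)) (Real.sqrt_pos.2 (ha y))).le)
    have hr : ∑ y, a y * (Real.sqrt (b y) / Real.sqrt (a y)) = B := by
      apply Finset.sum_congr rfl
      intro y _
      have h1 : a y * (Real.sqrt (b y) / Real.sqrt (a y))
          = (a y / Real.sqrt (a y)) * Real.sqrt (b y) := by ring
      rw [h1, Real.div_sqrt]
    rw [hr] at hgm
    have hlP : 0 < ∏ y : Y, (Real.sqrt (b y) / Real.sqrt (a y)) ^ (a y) :=
      Finset.prod_pos (fun y _ => Real.rpow_pos_of_pos (div_pos (Real.sqrt_pos.2 (hb y)) (Real.sqrt_pos.2 (ha y))) _)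
    have hlog := Real.log_le_log hlP hgm
    rw [Real.log_prod (fun y _ => ne_of_gt (Real.rpow_pos_of_pos (div_pos (Real.sqrt_pos.2 (hb y)) (Real.sqrt_pos.2 (ha y))) _))] at hlog
    have hterm : ∀ y : Y, Real.log ((Real.sqrt (b y) / Real.sqrt (a y)) ^ (a y))
        = -(a y * (Real.log (a y) - Real.log (b y))) / 2 := by
      intro y
      rw [Real.log_rpow (div_pos (Real.sqrt_pos.2 (hb y)) (Real.sqrt_pos.2 (ha y))), Real.log_div (ne_of_gt (Real.sqrt_pos.2 (hb y)))
        (ne_of_gt (Real.sqrt_pos.2 (ha y))), Real.log_sqrt (hb y).le, Real.log_sqrt (ha y).le]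
      ring
    rw [Finset.sum_congr rfl (fun y _ => hterm y)] at hlog
    calc -K / 2 = ∑ y, -(a y * (Real.log (a y) - Real.log (b y))) / 2 := by
          rw [← Finset.sum_div, Finset.sum_neg_distrib, hK]
      _ ≤ Real.log B := hlog
  have h3 : Real.log B ≤ B - 1 := Real.log_le_sub_one_of_pos hB0
  have h4 : 1 - B ^ 2 ≤ K := by nlinarith [sq_nonneg (1 - B)]
  have hK0 : 0 ≤ K := by nlinarith
  refine ⟨hK0, ?_⟩
  have htv : ∑ y, |b y - a y| ≤ 2 * Real.sqrt (1 - B ^ 2) := by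
    have hCS := Real.sum_mul_le_sqrt_mul_sqrt Finset.univ
      (fun y => |Real.sqrt (b y) - Real.sqrt (a y)|)
      (fun y => Real.sqrt (b y) + Real.sqrt (a y))
    have he : ∀ y : Y, |b y - a y|
        = |Real.sqrt (b y) - Real.sqrt (a y)| * (Real.sqrt (b y) + Real.sqrt (a y)) := by
      intro y
      rw [← abs_of_nonneg (show (0:ℝ) ≤ Real.sqrt (b y) + Real.sqrt (a y) by positivity),
        ← abs_mul]
      congr 1
      have e : (Real.sqrt (b y) - Real.sqrt (a y)) * (Real.sqrt (b y) + Real.sqrt (a y))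
          = Real.sqrt (b y) ^ 2 - Real.sqrt (a y) ^ 2 := by ring
      rw [e, Real.sq_sqrt (hb y).le, Real.sq_sqrt (ha y).le]
    have hf2 : ∑ y, |Real.sqrt (b y) - Real.sqrt (a y)| ^ 2 = 2 - 2 * B := by
      have hh : ∀ y : Y, |Real.sqrt (b y) - Real.sqrt (a y)| ^ 2
          = b y + a y - 2 * (Real.sqrt (a y) * Real.sqrt (b y)) := by
        intro y
        rw [sq_abs, sub_sq, Real.sq_sqrt (hb y).le, Real.sq_sqrt (ha y).le]
        ring
      rw [Finset.sum_congr rfl (fun y _ => hh y), Finset.sum_sub_distrib,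
        Finset.sum_add_distrib, ha1, hb1, ← Finset.mul_sum, ← hB]
      ring
    have hg2 : ∑ y, (Real.sqrt (b y) + Real.sqrt (a y)) ^ 2 = 2 + 2 * B := by
      have hh : ∀ y : Y, (Real.sqrt (b y) + Real.sqrt (a y)) ^ 2
          = b y + a y + 2 * (Real.sqrt (a y) * Real.sqrt (b y)) := by
        intro y
        rw [add_sq, Real.sq_sqrt (hb y).le, Real.sq_sqrt (ha y).le]
        ring
      rw [Finset.sum_congr rfl (fun y _ => hh y), Finset.sum_add_distrib,
        Finset.sum_add_distrib, ha1, hb1, ← Finset.mul_sum, ← hB]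
      ring
    calc ∑ y, |b y - a y|
        = ∑ y, |Real.sqrt (b y) - Real.sqrt (a y)| * (Real.sqrt (b y) + Real.sqrt (a y)) :=
          Finset.sum_congr rfl (fun y _ => he y)
      _ ≤ Real.sqrt (∑ y, |Real.sqrt (b y) - Real.sqrt (a y)| ^ 2)
            * Real.sqrt (∑ y, (Real.sqrt (b y) + Real.sqrt (a y)) ^ 2) := hCS
      _ = Real.sqrt (2 - 2 * B) * Real.sqrt (2 + 2 * B) := by rw [hf2, hg2]
      _ = Real.sqrt ((2 - 2 * B) * (2 + 2 * B)) := (Real.sqrt_mul (by linarith) _).symm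
      _ = Real.sqrt (2 ^ 2 * (1 - B ^ 2)) := by ring_nf
      _ = 2 * Real.sqrt (1 - B ^ 2) := by
          rw [Real.sqrt_mul (by positivity), Real.sqrt_sq (by norm_num : (0:ℝ) ≤ 2)]
  have hmono : Real.sqrt (1 - B ^ 2) ≤ Real.sqrt K := Real.sqrt_le_sqrt h4
  rw [tvDist]
  linarith


section vovkAux

variable {Y : Type} [Fintype Y] {T : ℕ}

/-- Prefix-product weight of a path under kernel `κ`, over coordinates `< t`. -/
noncomputable def vPre (κ : (Fin T → Y) → Fin T → Y → ℝ) (t : ℕ) (ω : Fin T → Y) : ℝ :=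
  ∏ s ∈ Finset.univ.filter (fun s : Fin T => (s : ℕ) < t), κ ω s (ω s)

noncomputable def vS (κ : (Fin T → Y) → Fin T → Y → ℝ) (t : ℕ) (G : (Fin T → Y) → ℝ) : ℝ :=
  ∑ ω : Fin T → Y, vPre κ t ω * G ω

/-- `G` depends only on coordinates `< t`. -/
def vDep (t : ℕ) (G : (Fin T → Y) → ℝ) : Prop :=
  ∀ ω ω' : Fin T → Y, (∀ s : Fin T, (s : ℕ) < t → ω s = ω' s) → G ω = G ω'

/-- Adaptivity: `κ ω t` depends only on coordinates `< t` of `ω`. -/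
def vAdapt (κ : (Fin T → Y) → Fin T → Y → ℝ) : Prop :=
  ∀ ω ω' : Fin T → Y, ∀ t : Fin T, (∀ s : Fin T, (s : ℕ) < (t : ℕ) → ω s = ω' s) → κ ω t = κ ω' t

lemma update_agree (ω : Fin T → Y) (u : Fin T) (y : Y) (t : ℕ) (h : t ≤ (u : ℕ)) :
    ∀ s : Fin T, (s : ℕ) < t → Function.update ω u y s = ω s := by
  intro s hs
  apply Function.update_of_ne
  intro he
  rw [he] at hs
  omega

lemma filter_lt_succ (t : Fin T) :
    Finset.univ.filter (fun s : Fin T => (s : ℕ) < (t : ℕ) + 1)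
      = insert t (Finset.univ.filter (fun s : Fin T => (s : ℕ) < (t : ℕ))) := by
  ext s
  simp only [Finset.mem_filter, Finset.mem_univ, Finset.mem_insert, true_and, Fin.ext_iff]
  omega

lemma filter_lt_top :
    Finset.univ.filter (fun s : Fin T => (s : ℕ) < T) = Finset.univ :=
  Finset.filter_true_of_mem (fun s _ => s.isLt)

lemma vPre_update (κ : (Fin T → Y) → Fin T → Y → ℝ) (hκa : vAdapt κ)
    (t : ℕ) (ω : Fin T → Y) (u : Fin T) (y : Y) (h : t ≤ (u : ℕ)) :
    vPre κ t (Function.update ω u y) = vPre κ t ω := by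
  apply Finset.prod_congr rfl
  intro s hs
  rw [Finset.mem_filter] at hs
  have h1 : Function.update ω u y s = ω s :=
    update_agree ω u y t h s hs.2
  have h2 : κ (Function.update ω u y) s = κ ω s :=
    hκa _ _ s (fun s' hs' => update_agree ω u y t h s' (lt_of_lt_of_le hs' (by omega)))
  rw [h1, h2]

lemma sum_update_eq (F : (Fin T → Y) → ℝ) (t : Fin T) :
    ∑ ω : Fin T → Y, ∑ y : Y, F (Function.update ω t y)
      = (Fintype.card Y : ℝ) * ∑ ω : Fin T → Y, F ω := by
  classical
  calc ∑ ω : Fin T → Y, ∑ y : Y, F (Function.update ω t y)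
      = ∑ p : (Fin T → Y) × Y, F (Function.update p.1 t p.2) := by
        rw [Fintype.sum_prod_type]
    _ = ∑ p : (Fin T → Y) × Y, F p.1 :=
        Fintype.sum_equiv
          ⟨fun p => (Function.update p.1 t p.2, p.1 t),
           fun p => (Function.update p.1 t p.2, p.1 t),
           fun p => by
             simp [Function.update_idem, Function.update_self, Function.update_eq_self],
           fun p => by
             simp [Function.update_idem, Function.update_self, Function.update_eq_self]⟩
          _ _ (fun p => rfl)
    _ = (Fintype.card Y : ℝ) * ∑ ω : Fin T → Y, F ω := by
        rw [Fintype.sum_prod_type]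
        simp [Finset.sum_const, nsmul_eq_mul, Finset.mul_sum]

lemma vS_step (κ : (Fin T → Y) → Fin T → Y → ℝ) (hκa : vAdapt κ)
    (t : Fin T) (G : (Fin T → Y) → ℝ) :
    (Fintype.card Y : ℝ) * vS κ ((t : ℕ) + 1) G
      = vS κ (t : ℕ) (fun ω => ∑ y : Y, κ ω t y * G (Function.update ω t y)) := by
  unfold vS
  rw [← sum_update_eq (fun ω => vPre κ ((t : ℕ) + 1) ω * G ω) t]
  apply Finset.sum_congr rfl
  intro ω _
  rw [Finset.mul_sum]
  apply Finset.sum_congr rfl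
  intro y _
  have h2 : κ (Function.update ω t y) t = κ ω t :=
    hκa _ _ t (update_agree ω t y (t : ℕ) le_rfl)
  have h3 : vPre κ (t : ℕ) (Function.update ω t y) = vPre κ (t : ℕ) ω :=
    vPre_update κ hκa (t : ℕ) ω t y le_rfl
  show vPre κ ((t : ℕ) + 1) (Function.update ω t y) * G (Function.update ω t y) = _
  rw [vPre, filter_lt_succ, Finset.prod_insert (by simp)]
  rw [Function.update_self, h2]
  have h4 : (∏ s ∈ Finset.univ.filter (fun s : Fin T => (s : ℕ) < (t : ℕ)),
      κ (Function.update ω t y) s (Function.update ω t y s)) = vPre κ (t : ℕ) ω := h3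
  rw [h4]
  ring

lemma vS_pow (κ : (Fin T → Y) → Fin T → Y → ℝ) (hκa : vAdapt κ)
    (hκ1 : ∀ (ω : Fin T → Y) (u : Fin T), ∑ y : Y, κ ω u y = 1)
    (t : ℕ) (G : (Fin T → Y) → ℝ) (hG : vDep t G) :
    ∀ k : ℕ, t + k ≤ T → (Fintype.card Y : ℝ) ^ k * vS κ (t + k) G = vS κ t G := by
  intro k
  induction k with
  | zero => intro _; simp
  | succ k ih =>
    intro h
    have hu : t + k < T := by omega
    set u : Fin T := ⟨t + k, hu⟩ with hudef
    have hstep := vS_step κ hκa u G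
    have hin : (fun ω => ∑ y : Y, κ ω u y * G (Function.update ω u y)) = G := by
      funext ω
      have hupd : ∀ y : Y, G (Function.update ω u y) = G ω := fun y =>
        hG _ _ (update_agree ω u y t (Nat.le_add_right t k))
      simp only [hupd]
      rw [← Finset.sum_mul, hκ1, one_mul]
    rw [hin] at hstep
    have hrec := ih (by omega)
    calc (Fintype.card Y : ℝ) ^ (k + 1) * vS κ (t + (k + 1)) G
        = (Fintype.card Y : ℝ) ^ k * ((Fintype.card Y : ℝ) * vS κ ((u : ℕ) + 1) G) := by
          rw [pow_succ]
          have : t + (k + 1) = (u : ℕ) + 1 := rfl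
          rw [this]; ring
      _ = (Fintype.card Y : ℝ) ^ k * vS κ (t + k) G := by rw [hstep]
      _ = vS κ t G := hrec

lemma vS_total (κ : (Fin T → Y) → Fin T → Y → ℝ) (hκa : vAdapt κ)
    (hκ1 : ∀ (ω : Fin T → Y) (u : Fin T), ∑ y : Y, κ ω u y = 1)
    (hY : 0 < Fintype.card Y) :
    vS κ T (fun _ => (1 : ℝ)) = 1 := by
  have h := vS_pow κ hκa hκ1 0 (fun _ => (1 : ℝ)) (fun ω ω' _ => rfl) T (by omega)
  rw [zero_add] at h
  have h0 : vS κ (0 : ℕ) (fun _ => (1 : ℝ)) = (Fintype.card Y : ℝ) ^ T := by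
    unfold vS vPre
    have : Finset.univ.filter (fun s : Fin T => (s : ℕ) < 0) = ∅ := by
      apply Finset.filter_false_of_mem; intro s _; omega
    simp [this, Finset.card_univ]
  rw [h0] at h
  have hne : ((Fintype.card Y : ℝ) ^ T) ≠ 0 := by positivity
  field_simp at h
  exact h

lemma vS_tower (κ : (Fin T → Y) → Fin T → Y → ℝ) (hκa : vAdapt κ)
    (hκ1 : ∀ (ω : Fin T → Y) (u : Fin T), ∑ y : Y, κ ω u y = 1)
    (hY : 0 < Fintype.card Y) (t : Fin T)
    (f : (Fin T → Y) → Y → ℝ)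
    (hf : ∀ ω ω' : Fin T → Y, (∀ s : Fin T, (s : ℕ) < (t : ℕ) → ω s = ω' s) → f ω = f ω') :
    vS κ T (fun ω => f ω (ω t)) = vS κ T (fun ω => ∑ y : Y, κ ω t y * f ω y) := by
  set G : (Fin T → Y) → ℝ := fun ω => f ω (ω t) with hGdef
  set G' : (Fin T → Y) → ℝ := fun ω => ∑ y : Y, κ ω t y * f ω y with hG'def
  have hDepG : vDep ((t : ℕ) + 1) G := by
    intro ω ω' h
    have hft := hf ω ω' (fun s hs => h s (by omega))
    simp only [hGdef]
    rw [hft, h t (by omega)]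
  have hDepG' : vDep (t : ℕ) G' := by
    intro ω ω' h
    simp only [hG'def]
    apply Finset.sum_congr rfl
    intro y _
    rw [hκa ω ω' t h, hf ω ω' h]
  have h1 := vS_pow κ hκa hκ1 ((t : ℕ) + 1) G hDepG (T - ((t : ℕ) + 1)) (by omega)
  have h2 := vS_pow κ hκa hκ1 (t : ℕ) G' hDepG' (T - (t : ℕ)) (by omega)
  have e1 : (t : ℕ) + 1 + (T - ((t : ℕ) + 1)) = T := by omega
  have e2 : (t : ℕ) + (T - (t : ℕ)) = T := by omega
  rw [e1] at h1
  rw [e2] at h2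
  have hstep := vS_step κ hκa t G
  have hinner : (fun ω => ∑ y : Y, κ ω t y * G (Function.update ω t y)) = G' := by
    funext ω
    apply Finset.sum_congr rfl
    intro y _
    congr 1
    show f (Function.update ω t y) (Function.update ω t y t) = f ω y
    rw [Function.update_self,
      hf (Function.update ω t y) ω (update_agree ω t y (t : ℕ) le_rfl)]
  rw [hinner] at hstep
  have hcY : (0 : ℝ) < (Fintype.card Y : ℝ) := by exact_mod_cast hY
  have key : (Fintype.card Y : ℝ) ^ (T - (t : ℕ)) * vS κ T G
      = (Fintype.card Y : ℝ) ^ (T - (t : ℕ)) * vS κ T G' := by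
    have e3 : T - (t : ℕ) = (T - ((t : ℕ) + 1)) + 1 := by omega
    calc (Fintype.card Y : ℝ) ^ (T - (t : ℕ)) * vS κ T G
        = (Fintype.card Y : ℝ) * ((Fintype.card Y : ℝ) ^ (T - ((t : ℕ) + 1)) * vS κ T G) := by
          rw [e3, pow_succ]; ring
      _ = (Fintype.card Y : ℝ) * vS κ ((t : ℕ) + 1) G := by rw [h1]
      _ = vS κ (t : ℕ) G' := hstep
      _ = (Fintype.card Y : ℝ) ^ (T - (t : ℕ)) * vS κ T G' := h2.symm
  exact mul_left_cancel₀ (by positivity) key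

lemma vS_mono (κ : (Fin T → Y) → Fin T → Y → ℝ)
    (hκ0 : ∀ (ω : Fin T → Y) (s : Fin T) (y : Y), 0 ≤ κ ω s y)
    (t : ℕ) {G G' : (Fin T → Y) → ℝ} (h : ∀ ω, G ω ≤ G' ω) :
    vS κ t G ≤ vS κ t G' :=
  Finset.sum_le_sum fun ω _ =>
    mul_le_mul_of_nonneg_left (h ω) (Finset.prod_nonneg fun s _ => hκ0 ω s (ω s))

lemma vS_sum {β : Type*} (κ : (Fin T → Y) → Fin T → Y → ℝ) (t : ℕ)
    (A : Finset β) (G : β → (Fin T → Y) → ℝ) :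
    vS κ t (fun ω => ∑ b ∈ A, G b ω) = ∑ b ∈ A, vS κ t (G b) := by
  unfold vS
  simp_rw [Finset.mul_sum]
  rw [Finset.sum_comm]

lemma vS_const (κ : (Fin T → Y) → Fin T → Y → ℝ) (hκa : vAdapt κ)
    (hκ1 : ∀ (ω : Fin T → Y) (u : Fin T), ∑ y : Y, κ ω u y = 1)
    (hY : 0 < Fintype.card Y) (c : ℝ) :
    vS κ T (fun _ => c) = c := by
  have h := vS_total κ hκa hκ1 hY
  unfold vS at h ⊢
  simp only [mul_one] at h
  calc ∑ ω : Fin T → Y, vPre κ T ω * c = (∑ ω : Fin T → Y, vPre κ T ω) * c := by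
        rw [Finset.sum_mul]
    _ = c := by rw [h, one_mul]

end vovkAux
/-- In the realizable setting (outcomes drawn from the expert `istar`, with contexts
chosen adaptively as a function of the history), the predictions of Vovk's
aggregating algorithm converge to the true conditional distributions in total
variation on average:
`E[∑_{t=1}^T TV(q̂^t, p_{i*}(x^t))] ≤ sqrt(T · log |I|)`. -/
theorem vovk_realizable_tv
    (X Y I : Type) [Fintype X] [Fintype Y] [Fintype I] [Nonempty I]
    (T : ℕ)
    (p : I → X → Y → ℝ)
    (hp : ∀ i x' y', 0 < p i x' y')
    (hp1 : ∀ i x', ∑ y' : Y, p i x' y' = 1)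
    (istar : I)
    (x : (Fin T → Y) → Fin T → X)
    (hx : ∀ (ω ω' : Fin T → Y) (t : Fin T),
      (∀ s : Fin T, (s : ℕ) < (t : ℕ) → ω s = ω' s) → x ω t = x ω' t)
    (qhat : (Fin T → Y) → Fin T → Y → ℝ)
    (hqhat : ∀ (ω : Fin T → Y) (t : Fin T) (y' : Y), qhat ω t y' =
      ∑ i : I,
        (Real.exp (-(∑ s ∈ Finset.univ.filter (fun s : Fin T => (s : ℕ) < (t : ℕ)),
            Real.log (1 / p i (x ω s) (ω s)))) /
          ∑ j : I, Real.exp (-(∑ s ∈ Finset.univ.filter (fun s : Fin T => (s : ℕ) < (t : ℕ)),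
            Real.log (1 / p j (x ω s) (ω s))))) * p i (x ω t) y') :
    ∑ ω : Fin T → Y, (∏ t : Fin T, p istar (x ω t) (ω t)) *
        (∑ t : Fin T, tvDist (qhat ω t) (fun y' => p istar (x ω t) y'))
      ≤ Real.sqrt (T * Real.log (Fintype.card I)) := by
  classical
  by_cases hYne : Nonempty Y
  case neg =>
    rcases Nat.eq_zero_or_pos T with hT | hT
    · subst hT
      simp [Real.sqrt_nonneg]
    · haveI : IsEmpty (Fin T → Y) := ⟨fun ω => hYne ⟨ω ⟨0, hT⟩⟩⟩
      rw [Finset.univ_eq_empty, Finset.sum_empty]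
      exact Real.sqrt_nonneg _
  case pos =>
  haveI := hYne
  have hY : 0 < Fintype.card Y := Fintype.card_pos
  -- the kernel of the true distribution
  set κ : (Fin T → Y) → Fin T → Y → ℝ := fun ω t y => p istar (x ω t) y with hκdef
  have hκa : vAdapt κ := by
    intro ω ω' t h
    funext y
    simp only [hκdef]
    rw [hx ω ω' t h]
  have hκ1 : ∀ (ω : Fin T → Y) (t : Fin T), ∑ y : Y, κ ω t y = 1 := fun ω t => hp1 _ _
  have hκ0 : ∀ (ω : Fin T → Y) (t : Fin T) (y : Y), 0 ≤ κ ω t y := fun ω t y => (hp _ _ _).le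
  -- expert weights
  set w : I → ℕ → (Fin T → Y) → ℝ := fun i k ω =>
    ∏ s ∈ Finset.univ.filter (fun s : Fin T => (s : ℕ) < k), p i (x ω s) (ω s) with hwdef
  set W : ℕ → (Fin T → Y) → ℝ := fun k ω => ∑ i : I, w i k ω with hWdef
  have hwpos : ∀ i k ω, 0 < w i k ω := fun i k ω => Finset.prod_pos fun s _ => hp _ _ _
  have hWpos : ∀ k ω, 0 < W k ω :=
    fun k ω => Finset.sum_pos (fun i _ => hwpos i k ω) Finset.univ_nonempty
  have hexp : ∀ (i : I) (ω : Fin T → Y) (t : Fin T),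
      Real.exp (-(∑ s ∈ Finset.univ.filter (fun s : Fin T => (s : ℕ) < (t : ℕ)),
        Real.log (1 / p i (x ω s) (ω s)))) = w i (t : ℕ) ω := by
    intro i ω t
    have h1 : -(∑ s ∈ Finset.univ.filter (fun s : Fin T => (s : ℕ) < (t : ℕ)),
        Real.log (1 / p i (x ω s) (ω s)))
        = ∑ s ∈ Finset.univ.filter (fun s : Fin T => (s : ℕ) < (t : ℕ)),
            Real.log (p i (x ω s) (ω s)) := by
      rw [← Finset.sum_neg_distrib]
      apply Finset.sum_congr rfl
      intro s _
      rw [one_div, Real.log_inv, neg_neg]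
    rw [h1, Real.exp_sum]
    apply Finset.prod_congr rfl
    intro s _
    exact Real.exp_log (hp _ _ _)
  have hq : ∀ (ω : Fin T → Y) (t : Fin T) (y : Y),
      qhat ω t y = ∑ i : I, (w i (t : ℕ) ω / W (t : ℕ) ω) * p i (x ω t) y := by
    intro ω t y
    rw [hqhat]
    apply Finset.sum_congr rfl
    intro i _
    congr 1
    rw [hexp i ω t]
    congr 1
    exact Finset.sum_congr rfl fun j _ => hexp j ω t
  have hqpos : ∀ (ω : Fin T → Y) (t : Fin T) (y : Y), 0 < qhat ω t y := by
    intro ω t y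
    rw [hq]
    exact Finset.sum_pos
      (fun i _ => mul_pos (div_pos (hwpos i _ ω) (hWpos _ ω)) (hp _ _ _))
      Finset.univ_nonempty
  have hqsum : ∀ (ω : Fin T → Y) (t : Fin T), ∑ y : Y, qhat ω t y = 1 := by
    intro ω t
    rw [Finset.sum_congr rfl fun y _ => hq ω t y]
    rw [Finset.sum_comm]
    have h1 : ∀ i : I, ∑ y : Y, (w i (t : ℕ) ω / W (t : ℕ) ω) * p i (x ω t) y
        = w i (t : ℕ) ω / W (t : ℕ) ω := by
      intro i
      rw [← Finset.mul_sum, hp1, mul_one]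
    rw [Finset.sum_congr rfl fun i _ => h1 i, ← Finset.sum_div]
    have : ∑ i : I, w i (t : ℕ) ω = W (t : ℕ) ω := rfl
    rw [this, div_self (ne_of_gt (hWpos _ ω))]
  have hqadapt : ∀ (ω ω' : Fin T → Y) (t : Fin T),
      (∀ s : Fin T, (s : ℕ) < (t : ℕ) → ω s = ω' s) → qhat ω t = qhat ω' t := by
    intro ω ω' t h
    funext y
    rw [hq, hq]
    have hws : ∀ i : I, w i (t : ℕ) ω = w i (t : ℕ) ω' := by
      intro i
      apply Finset.prod_congr rfl
      intro s hs
      rw [Finset.mem_filter] at hs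
      rw [hx ω ω' s (fun u hu => h u (lt_trans hu hs.2)), h s hs.2]
    have hWs : W (t : ℕ) ω = W (t : ℕ) ω' := Finset.sum_congr rfl fun i _ => hws i
    have hxt : x ω t = x ω' t := hx ω ω' t h
    apply Finset.sum_congr rfl
    intro i _
    rw [hws i, hWs, hxt]
  -- pathwise regret bound
  have regret : ∀ ω : Fin T → Y,
      ∑ t : Fin T, (Real.log (p istar (x ω t) (ω t)) - Real.log (qhat ω t (ω t)))
        ≤ Real.log (Fintype.card I) := by
    intro ω
    have hstep : ∀ t : Fin T, qhat ω t (ω t) = W ((t : ℕ) + 1) ω / W (t : ℕ) ω := by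
      intro t
      rw [hq]
      have hsucc : ∀ i : I, w i ((t : ℕ) + 1) ω = p i (x ω t) (ω t) * w i (t : ℕ) ω := by
        intro i
        simp only [hwdef]
        rw [filter_lt_succ, Finset.prod_insert (by simp)]
      rw [eq_div_iff (ne_of_gt (hWpos _ _)), Finset.sum_mul]
      have h2 : ∀ i : I,
          (w i (t : ℕ) ω / W (t : ℕ) ω) * p i (x ω t) (ω t) * W (t : ℕ) ω
            = w i ((t : ℕ) + 1) ω := by
        intro i
        have hWne : W (t : ℕ) ω ≠ 0 := ne_of_gt (hWpos _ _)
        rw [hsucc i]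
        calc w i (t : ℕ) ω / W (t : ℕ) ω * p i (x ω t) (ω t) * W (t : ℕ) ω
            = w i (t : ℕ) ω * p i (x ω t) (ω t) * (W (t : ℕ) ω / W (t : ℕ) ω) := by ring
          _ = p i (x ω t) (ω t) * w i (t : ℕ) ω := by rw [div_self hWne, mul_one]; ring
      rw [Finset.sum_congr rfl fun i _ => h2 i]
    have hlog : ∀ t : Fin T, Real.log (qhat ω t (ω t))
        = Real.log (W ((t : ℕ) + 1) ω) - Real.log (W (t : ℕ) ω) := by
      intro t
      rw [hstep t, Real.log_div (ne_of_gt (hWpos _ _)) (ne_of_gt (hWpos _ _))]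
    rw [Finset.sum_sub_distrib, Finset.sum_congr rfl fun t _ => hlog t]
    have htel : ∑ t : Fin T, (Real.log (W ((t : ℕ) + 1) ω) - Real.log (W (t : ℕ) ω))
        = Real.log (W T ω) - Real.log (W 0 ω) := by
      rw [Fin.sum_univ_eq_sum_range (fun k => Real.log (W (k + 1) ω) - Real.log (W k ω)) T]
      exact Finset.sum_range_sub (fun k => Real.log (W k ω)) T
    rw [htel]
    have hW0 : W 0 ω = (Fintype.card I : ℝ) := by
      simp only [hWdef, hwdef]
      have h0 : Finset.univ.filter (fun s : Fin T => (s : ℕ) < 0) = ∅ :=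
        Finset.filter_false_of_mem (fun s _ => by omega)
      simp [h0]
    have hWT : ∑ t : Fin T, Real.log (p istar (x ω t) (ω t)) ≤ Real.log (W T ω) := by
      have h1 : w istar T ω ≤ W T ω :=
        Finset.single_le_sum (fun i _ => (hwpos i T ω).le) (Finset.mem_univ istar)
      have h2 : Real.log (w istar T ω) ≤ Real.log (W T ω) :=
        Real.log_le_log (hwpos istar T ω) h1
      have h3 : Real.log (w istar T ω) = ∑ t : Fin T, Real.log (p istar (x ω t) (ω t)) := by
        simp only [hwdef]
        rw [filter_lt_top]
        exact Real.log_prod fun s _ => ne_of_gt (hp _ _ _)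
      linarith
    rw [hW0]
    linarith
  -- per-step conditional KL divergence
  set D : (Fin T → Y) → Fin T → ℝ := fun ω t =>
    ∑ y : Y, p istar (x ω t) y * (Real.log (p istar (x ω t) y) - Real.log (qhat ω t y))
    with hDdef
  have hpinsker : ∀ (ω : Fin T → Y) (t : Fin T),
      0 ≤ D ω t ∧ tvDist (qhat ω t) (fun y => p istar (x ω t) y) ≤ Real.sqrt (D ω t) :=
    fun ω t => kl_pinsker (fun y => p istar (x ω t) y) (qhat ω t)
      (fun y => hp _ _ _) (hqpos ω t) (hp1 _ _) (hqsum ω t)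
  -- tower property per step
  have tower : ∀ t : Fin T, vS κ T (fun ω => D ω t)
      = vS κ T (fun ω => Real.log (p istar (x ω t) (ω t)) - Real.log (qhat ω t (ω t))) := by
    intro t
    have h := vS_tower κ hκa hκ1 hY t
      (fun ω y => Real.log (p istar (x ω t) y) - Real.log (qhat ω t y))
      (by
        intro ω ω' h
        beta_reduce
        rw [hx ω ω' t h, hqadapt ω ω' t h])
    exact h.symm
  -- expected cumulative KL is at most log |I|
  have Ebound : ∑ t : Fin T, vS κ T (fun ω => D ω t) ≤ Real.log (Fintype.card I) := by
    calc ∑ t : Fin T, vS κ T (fun ω => D ω t)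
        = ∑ t : Fin T, vS κ T
            (fun ω => Real.log (p istar (x ω t) (ω t)) - Real.log (qhat ω t (ω t))) :=
          Finset.sum_congr rfl fun t _ => tower t
      _ = vS κ T (fun ω => ∑ t : Fin T,
            (Real.log (p istar (x ω t) (ω t)) - Real.log (qhat ω t (ω t)))) :=
          (vS_sum κ T Finset.univ _).symm
      _ ≤ vS κ T (fun _ => Real.log (Fintype.card I)) := vS_mono κ hκ0 T regret
      _ = Real.log (Fintype.card I) := vS_const κ hκa hκ1 hY _
  -- rewrite the goal in terms of vS
  have hLHS : ∑ ω : Fin T → Y, (∏ t : Fin T, p istar (x ω t) (ω t)) *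
        (∑ t : Fin T, tvDist (qhat ω t) (fun y' => p istar (x ω t) y'))
      = vS κ T (fun ω => ∑ t : Fin T, tvDist (qhat ω t) (fun y' => p istar (x ω t) y')) := by
    apply Finset.sum_congr rfl
    intro ω _
    congr 1
    rw [vPre, filter_lt_top]
  rw [hLHS]
  have hpre0 : ∀ ω : Fin T → Y, 0 ≤ vPre κ T ω :=
    fun ω => Finset.prod_nonneg fun s _ => hκ0 ω s (ω s)
  have hpre1 : ∑ ω : Fin T → Y, vPre κ T ω = 1 := by
    have h := vS_total κ hκa hκ1 hY
    unfold vS at h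
    simpa using h
  calc vS κ T (fun ω => ∑ t : Fin T, tvDist (qhat ω t) (fun y' => p istar (x ω t) y'))
      ≤ vS κ T (fun ω => ∑ t : Fin T, Real.sqrt (D ω t)) :=
        vS_mono κ hκ0 T fun ω => Finset.sum_le_sum fun t _ => (hpinsker ω t).2
    _ = ∑ q : (Fin T → Y) × Fin T,
          Real.sqrt (vPre κ T q.1) * Real.sqrt (vPre κ T q.1 * D q.1 q.2) := by
        unfold vS
        rw [Fintype.sum_prod_type]
        apply Finset.sum_congr rfl
        intro ω _
        rw [Finset.mul_sum]
        apply Finset.sum_congr rfl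
        intro t _
        rw [Real.sqrt_mul (hpre0 ω)]
        rw [← mul_assoc, Real.mul_self_sqrt (hpre0 ω)]
    _ ≤ Real.sqrt (∑ q : (Fin T → Y) × Fin T, vPre κ T q.1)
          * Real.sqrt (∑ q : (Fin T → Y) × Fin T, vPre κ T q.1 * D q.1 q.2) := by
        have h := Real.sum_mul_le_sqrt_mul_sqrt Finset.univ
          (fun q : (Fin T → Y) × Fin T => Real.sqrt (vPre κ T q.1))
          (fun q : (Fin T → Y) × Fin T => Real.sqrt (vPre κ T q.1 * D q.1 q.2))
        have e1 : ∑ q : (Fin T → Y) × Fin T, Real.sqrt (vPre κ T q.1) ^ 2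
            = ∑ q : (Fin T → Y) × Fin T, vPre κ T q.1 :=
          Finset.sum_congr rfl fun q _ => Real.sq_sqrt (hpre0 q.1)
        have e2 : ∑ q : (Fin T → Y) × Fin T, Real.sqrt (vPre κ T q.1 * D q.1 q.2) ^ 2
            = ∑ q : (Fin T → Y) × Fin T, vPre κ T q.1 * D q.1 q.2 :=
          Finset.sum_congr rfl fun q _ =>
            Real.sq_sqrt (mul_nonneg (hpre0 q.1) (hpinsker q.1 q.2).1)
        rw [e1, e2] at h
        exact h
    _ ≤ Real.sqrt (T * Real.log (Fintype.card I)) := by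
        have hA : ∑ q : (Fin T → Y) × Fin T, vPre κ T q.1 = (T : ℝ) := by
          rw [Fintype.sum_prod_type]
          simp only [Finset.sum_const, Finset.card_univ, Fintype.card_fin, nsmul_eq_mul]
          rw [← Finset.mul_sum, hpre1, mul_one]
        have hB : ∑ q : (Fin T → Y) × Fin T, vPre κ T q.1 * D q.1 q.2
            ≤ Real.log (Fintype.card I) := by
          have h1 : ∑ q : (Fin T → Y) × Fin T, vPre κ T q.1 * D q.1 q.2
              = ∑ t : Fin T, vS κ T (fun ω => D ω t) := by
            rw [Fintype.sum_prod_type]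
            rw [← vS_sum κ T Finset.univ (fun (t : Fin T) ω => D ω t)]
            unfold vS
            apply Finset.sum_congr rfl
            intro ω _
            rw [Finset.mul_sum]
          rw [h1]
          exact Ebound
        rw [hA]
        have := mul_le_mul_of_nonneg_left (Real.sqrt_le_sqrt hB) (Real.sqrt_nonneg (T : ℝ))
        calc Real.sqrt (T : ℝ) * Real.sqrt (∑ q : (Fin T → Y) × Fin T, vPre κ T q.1 * D q.1 q.2)
            ≤ Real.sqrt (T : ℝ) * Real.sqrt (Real.log (Fintype.card I)) := this
          _ = Real.sqrt (T * Real.log (Fintype.card I)) :=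
            (Real.sqrt_mul (Nat.cast_nonneg T) _).symm
end

section
/- Mixed-to-behavioral policy equivalence: there exists a map F from product distributions over deterministic general policies to profiles of behavioral policies such that, for any finite-horizon Markov game and any product distribution σ̃ = (σ̃_1, ..., σ̃_m) over deterministic general policies, the trajectory distribution induced by sampling π_j ~ σ̃_j independently and playing (π_1,...,π_m) equals the trajectory distribution induced by the behavioral policy profile F(σ̃). Concretely, F_j(σ̃_j) assigns to each (history τ_{j,h-1}, state s_h, action a) the conditional probability σ̃_j({π_j : π_j(τ_{j,g}, s_g) = a_{j,g} ∀ g ≤ h}) / σ̃_j({π_j : π_j(τ_{j,g}, s_g) = a_{j,g} ∀ g ≤ h-1}) where a_{j,h} = a (arbitrary when the denominator is zero). -/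
/-- A behavioral (randomized general, history-dependent) policy of a player. -/
abbrev BehPol (S Rt Aj : Type) (H : ℕ) :=
  (h : Fin H) → (Fin (h : ℕ) → S × Aj × Rt) → S → Aj → ℝ

/-- A deterministic general (history-dependent) policy of a player. -/
abbrev DetPol (S Rt Aj : Type) (H : ℕ) :=
  (h : Fin H) → (Fin (h : ℕ) → S × Aj × Rt) → S → Aj

/-- Player `j`'s history up to step `h`, extracted from the full trajectory `τ`
using the deterministic reward functions `Rw`. -/
def histOf {S Rt : Type} {m H : ℕ} {A : Fin m → Type}
    (Rw : Fin H → S → ((j : Fin m) → A j) → Fin m → Rt)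
    (τ : Fin H → S × ((j : Fin m) → A j)) (j : Fin m) (h : Fin H) :
    Fin (h : ℕ) → S × A j × Rt :=
  fun g =>
    let g' : Fin H := ⟨g, g.isLt.trans h.isLt⟩
    ((τ g').1, (τ g').2 j, Rw g' (τ g').1 (τ g').2 j)

/-- Environment contribution to the probability of trajectory `τ`. -/
noncomputable def envProb {S : Type} {m H : ℕ} {A : Fin m → Type}
    (μ : S → ℝ) (Pt : Fin H → S → ((j : Fin m) → A j) → S → ℝ)
    (τ : Fin H → S × ((j : Fin m) → A j)) : ℝ :=
  (∏ h : Fin H, if (h : ℕ) = 0 then μ (τ h).1 else 1) *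
  ∏ h : Fin H,
    if hs : (h : ℕ) + 1 < H then Pt h (τ h).1 (τ h).2 (τ ⟨(h : ℕ) + 1, hs⟩).1 else 1

/-- `πj` is consistent with the history `hist` up to step `h`: at every earlier step
`g < h`, the action `πj` prescribes for the prefix of `hist` equals the action
recorded in `hist`. -/
def consistentUpTo {S Rt Aj : Type} {H : ℕ} (πj : DetPol S Rt Aj H)
    (h : Fin H) (hist : Fin (h : ℕ) → S × Aj × Rt) : Prop :=
  ∀ g : Fin (h : ℕ),
    πj ⟨g, g.isLt.trans h.isLt⟩
        (fun g' => hist ⟨g', g'.isLt.trans g.isLt⟩) (hist g).1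
      = (hist g).2.1

open scoped Classical in
/-- The mixed-to-behavioral map `F_j`: given a distribution `σt` over deterministic
general policies, the behavioral probability of playing `a` at (history `hist`,
state `s`, step `h`) is the conditional probability (under `σt`) that the sampled
policy is consistent with `hist` and plays `a`, given consistency with `hist`
(Lean's junk value `0` when the denominator vanishes plays the role of an
arbitrary choice). -/
noncomputable def mixedToBeh {S Rt Aj : Type} [Fintype S] [Fintype Rt] [Fintype Aj]
    [DecidableEq S] [DecidableEq Rt] [DecidableEq Aj] {H : ℕ}
    (σt : DetPol S Rt Aj H → ℝ) : BehPol S Rt Aj H :=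
  fun h hist s a =>
    (∑ πj ∈ Finset.univ.filter (fun πj : DetPol S Rt Aj H =>
        consistentUpTo πj h hist ∧ πj h hist s = a), σt πj) /
    (∑ πj ∈ Finset.univ.filter (fun πj : DetPol S Rt Aj H =>
        consistentUpTo πj h hist), σt πj)

open scoped Classical in
/-- Single-player Kuhn identity. -/
lemma player_kuhn {S Rt : Type} [Fintype S] [DecidableEq S] [Fintype Rt] [DecidableEq Rt]
    {m H : ℕ} {A : Fin m → Type} [∀ j, Fintype (A j)] [∀ j, DecidableEq (A j)]
    (Rw : Fin H → S → ((j : Fin m) → A j) → Fin m → Rt)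
    (τ : Fin H → S × ((j : Fin m) → A j)) (j : Fin m)
    (σ : DetPol S Rt (A j) H → ℝ) (hσ0 : ∀ πj, 0 ≤ σ πj) (hσ1 : ∑ πj, σ πj = 1) :
    ∑ πj : DetPol S Rt (A j) H,
        σ πj * ∏ h : Fin H,
          (if πj h (histOf Rw τ j h) (τ h).1 = (τ h).2 j then (1 : ℝ) else 0)
      = ∏ h : Fin H, mixedToBeh σ h (histOf Rw τ j h) (τ h).1 ((τ h).2 j) := by
  set P : Fin H → DetPol S Rt (A j) H → Prop :=
    fun g πj => πj g (histOf Rw τ j g) (τ g).1 = (τ g).2 j with hP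
  set D : ℕ → ℝ := fun n =>
    ∑ πj ∈ Finset.univ.filter
      (fun πj : DetPol S Rt (A j) H => ∀ g : Fin H, (g : ℕ) < n → P g πj), σ πj with hD
  have hcons : ∀ (h : Fin H) (πj : DetPol S Rt (A j) H),
      consistentUpTo πj h (histOf Rw τ j h) ↔ ∀ g : Fin H, (g : ℕ) < (h : ℕ) → P g πj := by
    intro h πj
    constructor
    · intro hc g hg; exact hc ⟨g, hg⟩
    · intro hc g; exact hc ⟨g, g.isLt.trans h.isLt⟩ g.isLt
  have hD0 : D 0 = 1 := by
    simp only [hD]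
    rw [Finset.filter_true_of_mem (fun x _ => by intro g hg; omega)]
    exact hσ1
  have hDnn : ∀ n, 0 ≤ D n := fun n => Finset.sum_nonneg fun πj _ => hσ0 πj
  have hDmono : ∀ n, D (n + 1) ≤ D n := by
    intro n
    apply Finset.sum_le_sum_of_subset_of_nonneg
    · intro πj hπj
      simp only [Finset.mem_filter] at *
      exact ⟨hπj.1, fun g hg => hπj.2 g (by omega)⟩
    · intro i _ _; exact hσ0 i
  -- the step value
  set f : ℕ → ℝ := fun n =>
    if hn : n < H then
      mixedToBeh σ ⟨n, hn⟩ (histOf Rw τ j ⟨n, hn⟩) (τ ⟨n, hn⟩).1 ((τ ⟨n, hn⟩).2 j)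
    else 1 with hf
  have hfval : ∀ n (hn : n < H), f n = D (n + 1) / D n := by
    intro n hn
    have e1 : Finset.univ.filter (fun πj : DetPol S Rt (A j) H =>
        consistentUpTo πj ⟨n, hn⟩ (histOf Rw τ j ⟨n, hn⟩)) =
        Finset.univ.filter (fun πj => ∀ g : Fin H, (g : ℕ) < n → P g πj) := by
      apply Finset.filter_congr
      intro πj _
      simpa using hcons ⟨n, hn⟩ πj
    have e2 : Finset.univ.filter (fun πj : DetPol S Rt (A j) H =>
        consistentUpTo πj ⟨n, hn⟩ (histOf Rw τ j ⟨n, hn⟩) ∧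
          πj ⟨n, hn⟩ (histOf Rw τ j ⟨n, hn⟩) (τ ⟨n, hn⟩).1 = (τ ⟨n, hn⟩).2 j) =
        Finset.univ.filter (fun πj => ∀ g : Fin H, (g : ℕ) < n + 1 → P g πj) := by
      apply Finset.filter_congr
      intro πj _
      rw [hcons ⟨n, hn⟩ πj]
      simp only [Fin.val_mk]
      constructor
      · rintro ⟨h1, h2⟩ g hg
        rcases Nat.lt_or_ge (g : ℕ) n with hg' | hg'
        · exact h1 g hg'
        · have hgn : (g : ℕ) = n := by omega
          have : g = ⟨n, hn⟩ := Fin.ext (by simp [hgn])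
          rw [this]; exact h2
      · intro h1
        exact ⟨fun g hg => h1 g (by omega), h1 ⟨n, hn⟩ (by simp)⟩
    rw [hf]
    simp only [hn, dif_pos]
    simp only [mixedToBeh]
    rw [e1, e2]
  have key : ∀ n, n ≤ H → ∏ i ∈ Finset.range n, f i = D n := by
    intro n
    induction n with
    | zero => intro _; simpa using hD0.symm
    | succ n ih =>
      intro hn
      rw [Finset.prod_range_succ, ih (by omega), hfval n (by omega)]
      rcases eq_or_ne (D n) 0 with h0 | h0
      · have : D (n + 1) = 0 := le_antisymm (h0 ▸ hDmono n) (hDnn (n + 1))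
        rw [h0, this]; simp
      · rw [mul_comm, div_mul_cancel₀ _ h0]
  -- LHS equals D H
  have lhs_eq : ∑ πj : DetPol S Rt (A j) H,
      σ πj * ∏ h : Fin H,
        (if πj h (histOf Rw τ j h) (τ h).1 = (τ h).2 j then (1 : ℝ) else 0) = D H := by
    simp only [hD]
    rw [Finset.sum_filter]
    apply Finset.sum_congr rfl
    intro πj _
    rw [Finset.prod_boole]
    by_cases hall : ∀ h : Fin H, P h πj
    · rw [if_pos, if_pos, mul_one]
      · intro g _; exact hall g
      · intro h _; exact hall h
    · rw [if_neg, if_neg, mul_zero]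
      · intro hc; exact hall fun g => hc g g.isLt
      · intro hc; exact hall fun g => hc g (Finset.mem_univ g)
  rw [lhs_eq]
  have rhs_eq : ∏ h : Fin H, mixedToBeh σ h (histOf Rw τ j h) (τ h).1 ((τ h).2 j)
      = ∏ i ∈ Finset.range H, f i := by
    rw [← Fin.prod_univ_eq_prod_range]
    apply Finset.prod_congr rfl
    intro h _
    rw [hf]
    simp only [h.isLt, dif_pos, Fin.eta]
  rw [rhs_eq, key H le_rfl]

/-- Kuhn's theorem, mixed-to-behavioral direction, for finite-horizon Markov games:
for any product distribution `σt` over deterministic general policies, the probability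
of any full trajectory `τ` under independently sampling `π j ~ σt j` equals the
probability of `τ` under the behavioral policy profile `F(σt)` given by
`mixedToBeh`. -/
theorem mixed_to_behavioral_trajectory
    (S Rt : Type) [Fintype S] [DecidableEq S] [Fintype Rt] [DecidableEq Rt]
    (m H : ℕ) (A : Fin m → Type) [∀ j, Fintype (A j)] [∀ j, DecidableEq (A j)]
    (μ : S → ℝ) (hμ : (∀ s, 0 ≤ μ s) ∧ ∑ s, μ s = 1)
    (Pt : Fin H → S → ((j : Fin m) → A j) → S → ℝ)
    (hPt : ∀ h s a, (∀ s', 0 ≤ Pt h s a s') ∧ ∑ s', Pt h s a s' = 1)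
    (Rw : Fin H → S → ((j : Fin m) → A j) → Fin m → Rt)
    (σt : (j : Fin m) → DetPol S Rt (A j) H → ℝ)
    (hσt : ∀ j, (∀ πj, 0 ≤ σt j πj) ∧ ∑ πj, σt j πj = 1)
    (τ : Fin H → S × ((j : Fin m) → A j)) :
    ∑ π : (j : Fin m) → DetPol S Rt (A j) H,
        (∏ j, σt j (π j)) *
          (envProb μ Pt τ * ∏ h : Fin H, ∏ j : Fin m,
            (if π j h (histOf Rw τ j h) (τ h).1 = (τ h).2 j then (1 : ℝ) else 0))
      = envProb μ Pt τ *
          ∏ h : Fin H, ∏ j : Fin m,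
            mixedToBeh (σt j) h (histOf Rw τ j h) (τ h).1 ((τ h).2 j) := by
  rw [Finset.prod_comm]
  have step1 : ∀ j : Fin m,
      ∏ h : Fin H, mixedToBeh (σt j) h (histOf Rw τ j h) (τ h).1 ((τ h).2 j)
        = ∑ πj : DetPol S Rt (A j) H,
            (σt j) πj * ∏ h : Fin H,
              (if πj h (histOf Rw τ j h) (τ h).1 = (τ h).2 j then (1 : ℝ) else 0) :=
    fun j => (player_kuhn Rw τ j (σt j) (hσt j).1 (hσt j).2).symm
  calc ∑ π : (j : Fin m) → DetPol S Rt (A j) H,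
        (∏ j, σt j (π j)) *
          (envProb μ Pt τ * ∏ h : Fin H, ∏ j : Fin m,
            (if π j h (histOf Rw τ j h) (τ h).1 = (τ h).2 j then (1 : ℝ) else 0))
      = envProb μ Pt τ * ∑ π : (j : Fin m) → DetPol S Rt (A j) H,
          ∏ j : Fin m, (σt j (π j) * ∏ h : Fin H,
            (if π j h (histOf Rw τ j h) (τ h).1 = (τ h).2 j then (1 : ℝ) else 0)) := by
        rw [Finset.mul_sum]
        apply Finset.sum_congr rfl
        intro π _
        rw [Finset.prod_mul_distrib, Finset.prod_comm]
        ring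
    _ = envProb μ Pt τ * ∏ j : Fin m, ∑ πj : DetPol S Rt (A j) H,
          σt j πj * ∏ h : Fin H,
            (if πj h (histOf Rw τ j h) (τ h).1 = (τ h).2 j then (1 : ℝ) else 0) := by
        rw [Fintype.prod_sum]
    _ = envProb μ Pt τ *
          ∏ j : Fin m, ∏ h : Fin H,
            mixedToBeh (σt j) h (histOf Rw τ j h) (τ h).1 ((τ h).2 j) := by
        congr 1
        exact Finset.prod_congr rfl fun j _ => (step1 j).symm
end
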